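/- For n ≥ 3, let L_n be the language of the DFA with states {0,…,n−1}, initial state 0, final state n−1, where a acts as the cycle (1,…,n−1), b as the transposition (0,1), and c as (1 → 0). Then the reverse language L_n^R has state complexity exactly 2^n. -/

import Mathlib

/-- The state complexity of a language: the least number of states of a DFA accepting it. -/
noncomputable def stateComplexity {α : Type*} (L : Language α) : ℕ :=
  sInf {k : ℕ | ∃ M : DFA α (Fin k), M.accepts = L}

namespace ReverseWitness

variable {n : ℕ}

/-- Encode a pair (bit at 0, list of bits at positions 1..n-1) as a Boolean function. -/
def enc (n : ℕ) (b : Bool) (l : List Bool) : Fin n → Bool :=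
  fun q => if q.val = 0 then b else l.getD (q.val - 1) false

/-- The indicator of the set of states from which `u` leads to acceptance. -/
noncomputable def Ind (M : DFA (Fin 3) (Fin n)) (u : List (Fin 3)) : Fin n → Bool :=
  fun q => @decide (M.evalFrom q u ∈ M.accept) (Classical.propDecidable _)

lemma Ind_cons (M : DFA (Fin 3) (Fin n)) (x : Fin 3) (u : List (Fin 3)) :
    Ind M (x :: u) = fun q => Ind M u (M.step q x) := rfl

lemma enc_getD (b : Bool) (l : List Bool) (q : Fin n) (h : q.val ≠ 0) :
    enc n b l q = l.getD (q.val - 1) false := by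
  simp [enc, h]

section M

variable (M : DFA (Fin 3) (Fin n))

lemma preA (hn : 3 ≤ n)
    (ha : ∀ q : Fin n,
      (M.step q 0).val = if q.val = 0 then 0 else if q.val = n - 1 then 1 else q.val + 1)
    (b h : Bool) (t : List Bool) (hlen : t.length = n - 2) :
    (fun q => enc n b (h :: t) (M.step q 0)) = enc n b (t ++ [h]) := by
  funext q
  have hv := ha q
  rcases Nat.eq_zero_or_pos q.val with h0 | h0
  · rw [h0] at hv; simp at hv
    simp [enc, hv, h0]
  · rcases eq_or_ne q.val (n - 1) with he | he
    · have hs : (M.step q 0).val = 1 := by rw [hv, if_neg (by omega), if_pos he]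
      rw [enc_getD _ _ _ (by omega), enc_getD _ _ _ (by omega), hs]
      rw [he]
      have : (h :: t).getD (1 - 1) false = h := rfl
      rw [this, List.getD_append_right _ _ _ _ (by omega)]
      have : n - 1 - 1 - t.length = 0 := by omega
      rw [this]; rfl
    · have hs : (M.step q 0).val = q.val + 1 := by
        rw [hv, if_neg (by omega), if_neg he]
      have hq : q.val < n := q.isLt
      obtain ⟨j, hj⟩ : ∃ j, q.val = j + 1 := ⟨q.val - 1, by omega⟩
      rw [enc_getD _ _ _ (by omega), enc_getD _ _ _ (by omega), hs, hj]
      simp only [Nat.add_sub_cancel]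
      rw [List.getD_cons_succ, List.getD_append _ _ _ _ (by omega)]

lemma preB
    (hb : ∀ q : Fin n,
      (M.step q 1).val = if q.val = 0 then 1 else if q.val = 1 then 0 else q.val)
    (b h : Bool) (t : List Bool) :
    (fun q => enc n b (h :: t) (M.step q 1)) = enc n h (b :: t) := by
  funext q
  have hv := hb q
  rcases Nat.eq_zero_or_pos q.val with h0 | h0
  · rw [h0] at hv; simp at hv
    rw [enc_getD _ _ _ (by omega), hv]
    simp [enc, h0]
  · rcases eq_or_ne q.val 1 with he | he
    · rw [he] at hv; simp at hv
      have : (M.step q 1).val = 0 := hv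
      simp [enc, this, he]
    · have hs : (M.step q 1).val = q.val := by rw [hv, if_neg (by omega), if_neg he]
      rw [enc_getD _ _ _ (by omega), enc_getD _ _ _ (by omega), hs]
      rcases Nat.exists_eq_add_of_le (show 2 ≤ q.val by omega) with ⟨j, hj⟩
      have hj' : q.val = j + 2 := by omega
      rw [hj']
      rfl

lemma preC
    (hc : ∀ q : Fin n, (M.step q 2).val = if q.val = 1 then 0 else q.val)
    (b h : Bool) (t : List Bool) :
    (fun q => enc n b (h :: t) (M.step q 2)) = enc n b (b :: t) := by
  funext q
  have hv := hc q
  rcases eq_or_ne q.val 1 with he | he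
  · rw [he] at hv; simp at hv
    simp [enc, hv, he]
  · have hs : (M.step q 2).val = q.val := by rw [hv]; simp [he]
    rcases Nat.eq_zero_or_pos q.val with h0 | h0
    · simp [enc, hs, h0]
    · rw [enc_getD _ _ _ (by omega), enc_getD _ _ _ (by omega), hs]
      rcases Nat.exists_eq_add_of_le (show 2 ≤ q.val by omega) with ⟨j, hj⟩
      have hj' : q.val = j + 2 := by omega
      rw [hj']
      rfl

lemma Ind_nil_eq (hn : 3 ≤ n)
    (haccept : M.accept = {⟨n - 1, Nat.sub_lt (Nat.lt_of_lt_of_le (by decide) hn) Nat.one_pos⟩}) :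
    Ind M [] = enc n false (List.replicate (n - 2) false ++ [true]) := by
  funext q
  have : Ind M [] q = decide (q.val = n - 1) := by
    show (@decide (M.evalFrom q [] ∈ M.accept) (Classical.propDecidable _)) = _
    rw [decide_eq_decide]
    have : M.evalFrom q [] = q := rfl
    rw [this, haccept]
    simp [Fin.ext_iff]
  rw [this]
  rcases Nat.eq_zero_or_pos q.val with h0 | h0
  · simp [enc, h0]; omega
  · rw [enc_getD _ _ _ (by omega)]
    rcases eq_or_ne q.val (n - 1) with he | he
    · rw [he, List.getD_append_right _ _ _ _ (by simp; omega)]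
      simp
      have : n - 1 - 1 - (n - 2) = 0 := by omega
      rw [this]; rfl
    · have hq : q.val < n := q.isLt
      rw [List.getD_append _ _ _ _ (by simp; omega)]
      simp [List.getElem?_getD_replicate_default_eq]
      omega

/-- Every Boolean subset of the state space is the indicator of some word. -/
lemma reach (hn : 3 ≤ n)
    (haccept : M.accept = {⟨n - 1, Nat.sub_lt (Nat.lt_of_lt_of_le (by decide) hn) Nat.one_pos⟩})
    (ha : ∀ q : Fin n,
      (M.step q 0).val = if q.val = 0 then 0 else if q.val = n - 1 then 1 else q.val + 1)
    (hb : ∀ q : Fin n,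
      (M.step q 1).val = if q.val = 0 then 1 else if q.val = 1 then 0 else q.val)
    (hc : ∀ q : Fin n, (M.step q 2).val = if q.val = 1 then 0 else q.val) :
    ∀ f : Fin n → Bool, ∃ u : List (Fin 3), Ind M u = f := by
  set P : (Fin n → Bool) → Prop := fun f => ∃ u, Ind M u = f with hP
  have hpre : ∀ (f : Fin n → Bool) (x : Fin 3), P f → P (fun q => f (M.step q x)) := by
    rintro f x ⟨u, rfl⟩
    exact ⟨x :: u, rfl⟩
  -- step lemmas specialized to P
  have hA : ∀ (b h : Bool) (t : List Bool), t.length = n - 2 →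
      P (enc n b (h :: t)) → P (enc n b (t ++ [h])) := by
    intro b h t hlen hp
    have := hpre _ 0 hp
    rwa [preA M hn ha b h t hlen] at this
  have hB : ∀ (b h : Bool) (t : List Bool),
      P (enc n b (h :: t)) → P (enc n h (b :: t)) := by
    intro b h t hp
    have := hpre _ 1 hp
    rwa [preB M hb b h t] at this
  have hC : ∀ (b h : Bool) (t : List Bool),
      P (enc n b (h :: t)) → P (enc n b (b :: t)) := by
    intro b h t hp
    have := hpre _ 2 hp
    rwa [preC M hc b h t] at this
  -- base point
  have h0 : P (enc n false (List.replicate (n - 2) false ++ [true])) :=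
    ⟨[], Ind_nil_eq M hn haccept⟩
  -- rotate the single `true` to the head
  have hrot : ∀ k, k ≤ n - 2 →
      P (enc n false (List.replicate (n - 2 - k) false ++ true :: List.replicate k false)) := by
    intro k
    induction k with
    | zero => intro _; simpa using h0
    | succ k ih =>
      intro hk
      have hp := ih (by omega)
      have hsplit : List.replicate (n - 2 - k) false ++ true :: List.replicate k false
          = false :: (List.replicate (n - 2 - (k + 1)) false ++ true :: List.replicate k false) := by
        have : n - 2 - k = (n - 2 - (k + 1)) + 1 := by omega
        rw [this, List.replicate_succ]
        simp
      rw [hsplit] at hp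
      have := hA false false _ (by simp; omega) hp
      have heq : (List.replicate (n - 2 - (k + 1)) false ++ true :: List.replicate k false) ++ [false]
          = List.replicate (n - 2 - (k + 1)) false ++ true :: List.replicate (k + 1) false := by
        simp [List.replicate_succ']
      rwa [heq] at this
  have h1 : P (enc n false (true :: List.replicate (n - 2) false)) := by
    have := hrot (n - 2) le_rfl
    simpa using this
  -- swap to make the 0-bit true and everything else false
  have h2 : P (enc n true (false :: List.replicate (n - 2) false)) := hB false true _ h1
  -- the writing loop
  have hloop : ∀ w : List Bool, w.length ≤ n - 2 →
      P (enc n true (List.replicate (n - 1 - w.length) false ++ w)) := by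
    intro w
    induction w using List.reverseRecOn with
    | nil =>
      intro _
      simp only [List.length_nil, Nat.sub_zero, List.append_nil]
      have heq : List.replicate (n - 1) false = false :: List.replicate (n - 2) false := by
        have : n - 1 = (n - 2) + 1 := by omega
        rw [this, List.replicate_succ]
      rw [heq]; exact h2
    | append_singleton w x ih =>
      intro hl
      simp only [List.length_append, List.length_singleton] at hl
      have hp := ih (by omega)
      set k := w.length with hk
      have hsplit : List.replicate (n - 1 - k) false ++ w
          = false :: (List.replicate (n - 2 - k) false ++ w) := by
        have : n - 1 - k = (n - 2 - k) + 1 := by omega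
        rw [this, List.replicate_succ]
        simp
      rw [hsplit] at hp
      -- make the head equal to x
      have hx : P (enc n true (x :: (List.replicate (n - 2 - k) false ++ w))) := by
        cases x with
        | false => exact hp
        | true => exact hC true false _ hp
      have := hA true x _ (by simp; omega) hx
      have heq : (List.replicate (n - 2 - k) false ++ w) ++ [x]
          = List.replicate (n - 1 - (w ++ [x]).length) false ++ (w ++ [x]) := by
        simp only [List.length_append, List.length_singleton]
        have : n - 1 - (k + 1) = n - 2 - k := by omega
        rw [this, List.append_assoc]
      rwa [heq] at this
  -- all encodings with head prescribed
  have hall : ∀ (b : Bool) (l : List Bool), l.length = n - 1 → P (enc n b l) := by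
    intro b l hlen
    match l, hlen with
    | [], hlen => simp at hlen; omega
    | h :: t, hlen =>
      have hlt : t.length = n - 2 := by simp at hlen; omega
      have hbase : P (enc n true (false :: t)) := by
        have := hloop t (by omega)
        have heq : List.replicate (n - 1 - t.length) false ++ t = false :: t := by
          have : n - 1 - t.length = 1 := by omega
          rw [this]; rfl
        rwa [heq] at this
      cases b with
      | true =>
        cases h with
        | false => exact hbase
        | true => exact hC true false t hbase
      | false =>
        have hswap : P (enc n false (true :: t)) := hB true false t hbase
        cases h with
        | true => exact hswap
        | false => exact hC false true t hswap
  -- every f is an encoding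
  intro f
  have : f = enc n (f ⟨0, by omega⟩) (List.ofFn (fun i : Fin (n - 1) => f ⟨i.val + 1, by omega⟩)) := by
    funext q
    rcases Nat.eq_zero_or_pos q.val with hq0 | hq0
    · have : q = ⟨0, by omega⟩ := by exact Fin.ext hq0
      rw [this]; simp [enc]
    · rw [enc_getD _ _ _ (by omega)]
      have hlt : q.val - 1 < n - 1 := by have := q.isLt; omega
      rw [List.getD_eq_getElem _ _ (by simpa using hlt)]
      simp only [List.getElem_ofFn]
      congr 1
      apply Fin.ext
      simp
      omega
  rw [this]
  exact hall _ _ (by simp)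

/-- Every state of `M` is reachable from the start state. -/
lemma state_reach (hn : 3 ≤ n)
    (hstart : M.start = ⟨0, Nat.lt_of_lt_of_le (by decide) hn⟩)
    (ha : ∀ q : Fin n,
      (M.step q 0).val = if q.val = 0 then 0 else if q.val = n - 1 then 1 else q.val + 1)
    (hb : ∀ q : Fin n,
      (M.step q 1).val = if q.val = 0 then 1 else if q.val = 1 then 0 else q.val) :
    ∀ q : Fin n, ∃ v : List (Fin 3), M.eval v = q := by
  have key : ∀ k, ∀ j : Fin n, ∀ (_ : 1 ≤ j.val) (_ : j.val + k ≤ n - 1),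
      M.evalFrom j (List.replicate k 0) = ⟨j.val + k, by omega⟩ := by
    intro k
    induction k with
    | zero => intro j h1 h2; apply Fin.ext; simp [DFA.evalFrom]
    | succ k ih =>
      intro j h1 h2
      rw [List.replicate_succ]
      have hstep : M.evalFrom j ((0 : Fin 3) :: List.replicate k 0)
          = M.evalFrom (M.step j 0) (List.replicate k 0) := rfl
      rw [hstep]
      have hs : (M.step j 0).val = j.val + 1 := by
        rw [ha j, if_neg (by omega), if_neg (by omega)]
      have := ih (M.step j 0) (by omega) (by omega)
      rw [this]
      apply Fin.ext
      simp [hs]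
      omega
  intro q
  rcases Nat.eq_zero_or_pos q.val with h0 | h0
  · exact ⟨[], by rw [DFA.eval_nil, hstart]; exact (Fin.ext h0.symm)⟩
  · refine ⟨(1 : Fin 3) :: List.replicate (q.val - 1) 0, ?_⟩
    have hev : M.eval ((1 : Fin 3) :: List.replicate (q.val - 1) 0)
        = M.evalFrom (M.step M.start 1) (List.replicate (q.val - 1) 0) := rfl
    rw [hev]
    have hs0 : (M.start).val = 0 := by rw [hstart]
    have hs1 : (M.step M.start 1).val = 1 := by
      rw [hb M.start, if_pos hs0]
    have := key (q.val - 1) (M.step M.start 1) (by omega) (by have := q.isLt; omega)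
    rw [this]
    apply Fin.ext
    simp [hs1]
    omega

end M

end ReverseWitness

open ReverseWitness in
/-- For `n ≥ 3`, the reverse of the language `L_n` of the DFA over `{a,b,c}`
(`a = 0 : (1,…,n−1)`, `b = 1 : (0,1)`, `c = 2 : (1 → 0)`; initial state `0`;
final state `n−1`) has state complexity exactly `2^n`. -/
theorem reverse_complexity_of_witness (n : ℕ) (hn : 3 ≤ n) (M : DFA (Fin 3) (Fin n))
    (hstart : M.start = ⟨0, by omega⟩)
    (haccept : M.accept = {⟨n - 1, by omega⟩})
    (ha : ∀ q : Fin n,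
      (M.step q 0).val = if q.val = 0 then 0 else if q.val = n - 1 then 1 else q.val + 1)
    (hb : ∀ q : Fin n,
      (M.step q 1).val = if q.val = 0 then 1 else if q.val = 1 then 0 else q.val)
    (hc : ∀ q : Fin n, (M.step q 2).val = if q.val = 1 then 0 else q.val) :
    stateComplexity ({w : List (Fin 3) | w.reverse ∈ M.accepts} : Language (Fin 3)) = 2 ^ n := by
  set L : Language (Fin 3) := ({w : List (Fin 3) | w.reverse ∈ M.accepts} : Language (Fin 3))
    with hL
  have hcard : Fintype.card (Fin n → Bool) = 2 ^ n := by
    simp [Fintype.card_fun]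
  -- the subset-construction DFA over `Fin (2^n)`
  let e : (Fin n → Bool) ≃ Fin (2 ^ n) := Fintype.equivFinOfCardEq hcard
  let N : DFA (Fin 3) (Fin (2 ^ n)) :=
    { step := fun s x => e (fun q => (e.symm s) (M.step q x))
      start := e (Ind M [])
      accept := {s | (e.symm s) M.start = true} }
  have hNeval : ∀ (w u : List (Fin 3)),
      N.evalFrom (e (Ind M u)) w = e (Ind M (w.reverse ++ u)) := by
    intro w
    induction w with
    | nil => intro u; simp [DFA.evalFrom]
    | cons x w ih =>
      intro u
      have h1 : N.evalFrom (e (Ind M u)) (x :: w) = N.evalFrom (N.step (e (Ind M u)) x) w := rfl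
      rw [h1]
      have h2 : N.step (e (Ind M u)) x = e (Ind M (x :: u)) := by
        show e (fun q => (e.symm (e (Ind M u))) (M.step q x)) = _
        rw [Equiv.symm_apply_apply]
        rfl
      rw [h2, ih (x :: u)]
      congr 1
      simp
  have hNaccepts : N.accepts = L := by
    ext w
    have : w ∈ N.accepts ↔ (e.symm (N.eval w)) M.start = true := Iff.rfl
    rw [this]
    have : N.eval w = e (Ind M w.reverse) := by
      have := hNeval w []
      simpa [DFA.eval] using this
    rw [this, Equiv.symm_apply_apply]
    simp only [Ind, decide_eq_true_eq]
    rfl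
  have hub : 2 ^ n ∈ {k : ℕ | ∃ D : DFA (Fin 3) (Fin k), D.accepts = L} := ⟨N, hNaccepts⟩
  have hlb : ∀ k ∈ {k : ℕ | ∃ D : DFA (Fin 3) (Fin k), D.accepts = L}, 2 ^ n ≤ k := by
    rintro k ⟨D, hD⟩
    by_contra hlt
    push_neg at hlt
    -- choose a word for each indicator function
    have hreach := reach M hn haccept ha hb hc
    choose uf huf using hreach
    set F : (Fin n → Bool) → Fin k := fun f => D.eval ((uf f).reverse) with hF
    have hninj : ¬ Function.Injective F := by
      intro hinj
      have := Fintype.card_le_of_injective F hinj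
      rw [hcard] at this
      simp at this
      omega
    rw [Function.Injective] at hninj
    push_neg at hninj
    obtain ⟨f, g, hfg, hne⟩ := hninj
    obtain ⟨q, hq⟩ : ∃ q, f q ≠ g q := by
      by_contra h
      push_neg at h
      exact hne (funext h)
    obtain ⟨v, hv⟩ := state_reach M hn hstart ha hb q
    have hmem : ∀ f : Fin n → Bool,
        ((uf f).reverse ++ v.reverse ∈ D.accepts) ↔ f q = true := by
      intro f
      rw [hD, hL]
      have hrev : ((uf f).reverse ++ v.reverse).reverse = v ++ uf f := by
        simp
      show ((uf f).reverse ++ v.reverse).reverse ∈ M.accepts ↔ _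
      rw [hrev, DFA.mem_accepts]
      have : M.eval (v ++ uf f) = M.evalFrom (M.eval v) (uf f) := by
        simp [DFA.eval, DFA.evalFrom_of_append]
      rw [this, hv]
      have hfq := congrFun (huf f) q
      simp only [Ind] at hfq
      rw [← hfq]
      simp only [decide_eq_true_eq]
    have hsame : ((uf f).reverse ++ v.reverse ∈ D.accepts)
        ↔ ((uf g).reverse ++ v.reverse ∈ D.accepts) := by
      rw [DFA.mem_accepts, DFA.mem_accepts]
      have h1 : D.eval ((uf f).reverse ++ v.reverse)
          = D.evalFrom (D.eval ((uf f).reverse)) v.reverse := by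
        simp [DFA.eval, DFA.evalFrom_of_append]
      have h2 : D.eval ((uf g).reverse ++ v.reverse)
          = D.evalFrom (D.eval ((uf g).reverse)) v.reverse := by
        simp [DFA.eval, DFA.evalFrom_of_append]
      rw [h1, h2]
      have : D.eval ((uf f).reverse) = D.eval ((uf g).reverse) := hfg
      rw [this]
    rw [hmem f, hmem g] at hsame
    apply hq
    cases hf : f q <;> cases hg : g q <;> simp_all
  apply le_antisymm
  · exact Nat.sInf_le hub
  · exact le_csInf ⟨_, hub⟩ hlb
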